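/- Suppose N_D : [0,∞) → ℕ is nondecreasing with N_D(x) = 0 for x < λ₁ (some λ₁ > 0), and suppose N_D satisfies N_D(x) = 3 N_D(βr·x) + R(x) where 0 < βr < 1 and |R(x)| ≤ C x^{1/2} for x ≥ 1 and R bounded on [0,1]. Let d_S = ln 9 / (−ln(βr)) and assume d_S > 1. Then there exists a periodic function G with period T = −(1/2)ln(βr) such that N_D(x) = G((ln x)/2) x^{d_S/2} + O(x^{1/2}) as x → ∞. -/

import Mathlib

open Filter

/-- Renewal theorem applied to the Dirichlet eigenvalue counting function:
if `N_D` is nondecreasing, vanishes below the first eigenvalue `λ₁ > 0`, and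
satisfies `N_D(x) = 3 N_D(b x) + R(x)` with `0 < b < 1` (`b = βr`), where
`|R(x)| ≤ C x^{1/2}` for `x ≥ 1` and `R` is bounded on `[0,1]`, then, with
`d_S = ln 9/(−ln b) > 1`, there is a periodic function `G` of period
`T = −(1/2)·ln b` such that `N_D(x) = G((ln x)/2)·x^{d_S/2} + O(x^{1/2})`. -/
theorem renewal_asymptotics_counting_function
    (ND : ℝ → ℕ) (hmono : Monotone ND)
    (lam₁ : ℝ) (hlam₁ : 0 < lam₁) (hvanish : ∀ x < lam₁, ND x = 0)
    (b : ℝ) (hb0 : 0 < b) (hb1 : b < 1)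
    (R : ℝ → ℝ)
    (hren : ∀ x : ℝ, (ND x : ℝ) = 3 * (ND (b * x) : ℝ) + R x)
    (C : ℝ) (hR : ∀ x : ℝ, 1 ≤ x → |R x| ≤ C * x ^ ((1 : ℝ) / 2))
    (B : ℝ) (hR01 : ∀ x ∈ Set.Icc (0 : ℝ) 1, |R x| ≤ B)
    (dS : ℝ) (hdS : dS = Real.log 9 / (-Real.log b)) (hdS1 : 1 < dS) :
    ∃ G : ℝ → ℝ, Function.Periodic G (-(1 / 2) * Real.log b) ∧
      ∃ C' : ℝ, ∀ᶠ x : ℝ in atTop,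
        |(ND x : ℝ) - G (Real.log x / 2) * x ^ (dS / 2)| ≤ C' * x ^ ((1 : ℝ) / 2) := by
  have hlogb : Real.log b < 0 := Real.log_neg hb0 hb1
  set T : ℝ := -(1 / 2) * Real.log b with hT
  have hT0 : 0 < T := by rw [hT]; nlinarith
  have hC0 : 0 ≤ C := by
    have h1 := hR 1 le_rfl
    have : ((1:ℝ)) ^ ((1:ℝ)/2) = 1 := Real.one_rpow _
    rw [this, mul_one] at h1
    exact le_trans (abs_nonneg _) h1
  set f : ℝ → ℝ := fun t => Real.exp (-(t * dS)) * (ND (Real.exp (2 * t)) : ℝ) with hf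
  set u : ℝ → ℝ := fun t =>
    (3 : ℝ)⁻¹ * Real.exp (-(t * dS)) * R (Real.exp (2 * t) / b) with hu
  -- exp(-(T*dS)) = 1/3
  have hlog9 : Real.log 9 = 2 * Real.log 3 := by
    rw [show (9:ℝ) = 3 ^ 2 by norm_num, Real.log_pow]; push_cast; ring
  have hTdS : -(T * dS) = -Real.log 3 := by
    have hlb : Real.log b ≠ 0 := ne_of_lt hlogb
    rw [hT, hdS, hlog9]
    field_simp
  have hexpT : Real.exp (-(T * dS)) = 3⁻¹ := by
    rw [hTdS, Real.exp_neg, Real.exp_log (by norm_num : (0:ℝ) < 3)]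
  have hexp2T : Real.exp (2 * T) = b⁻¹ := by
    rw [hT, show 2 * (-(1/2) * Real.log b) = -Real.log b by ring, Real.exp_neg,
      Real.exp_log hb0]
  -- renewal step
  have key : ∀ t : ℝ, f (t + T) = f t + u t := by
    intro t
    have harg : Real.exp (2 * (t + T)) = Real.exp (2 * t) / b := by
      rw [show 2 * (t + T) = 2 * t + 2 * T by ring, Real.exp_add, hexp2T,
        div_eq_mul_inv]
    have hexp : Real.exp (-((t + T) * dS))
        = Real.exp (-(t * dS)) * 3⁻¹ := by
      rw [show -((t + T) * dS) = -(t * dS) + -(T * dS) by ring, Real.exp_add, hexpT]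
    have hrw : (ND (Real.exp (2 * t) / b) : ℝ)
        = 3 * (ND (Real.exp (2 * t)) : ℝ) + R (Real.exp (2 * t) / b) := by
      have := hren (Real.exp (2 * t) / b)
      rwa [mul_div_cancel₀ _ (ne_of_gt hb0)] at this
    simp only [hf, hu, harg, hexp, hrw]
    ring
  -- telescoping
  have tel : ∀ (τ : ℝ) (m : ℕ), f (τ + m * T)
      = f τ + ∑ n ∈ Finset.range m, u (τ + n * T) := by
    intro τ m
    induction m with
    | zero => simp
    | succ m ih =>
        have h1 : τ + ((m : ℝ) + 1) * T = (τ + (m : ℝ) * T) + T := by ring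
        push_cast
        rw [h1, key, ih, Finset.sum_range_succ]
        ring
  set K : ℝ := C / (3 * Real.sqrt b) with hK
  have hK0 : 0 ≤ K := by
    apply div_nonneg hC0
    positivity
  have hubound : ∀ s : ℝ, 0 ≤ s → |u s| ≤ K * Real.exp (-(s * (dS - 1))) := by
    intro s hs
    have harg1 : (1:ℝ) ≤ Real.exp (2 * s) / b := by
      rw [le_div_iff₀ hb0, one_mul]
      calc b ≤ 1 := hb1.le
        _ ≤ Real.exp (2 * s) := Real.one_le_exp (by linarith)
    have hRb := hR _ harg1
    have hpow : (Real.exp (2 * s) / b) ^ ((1:ℝ)/2)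
        = Real.exp s / Real.sqrt b := by
      rw [Real.div_rpow (Real.exp_pos _).le hb0.le, ← Real.exp_mul,
        show 2 * s * (1 / 2) = s by ring, ← Real.sqrt_eq_rpow]
    have habs : |u s| = 3⁻¹ * Real.exp (-(s * dS)) * |R (Real.exp (2 * s) / b)| := by
      rw [hu]
      simp only [abs_mul, abs_of_pos (Real.exp_pos _)]
      norm_num
    rw [habs]
    calc 3⁻¹ * Real.exp (-(s * dS)) * |R (Real.exp (2 * s) / b)|
        ≤ 3⁻¹ * Real.exp (-(s * dS)) * (C * (Real.exp s / Real.sqrt b)) := by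
          rw [← hpow]
          apply mul_le_mul_of_nonneg_left hRb
          positivity
      _ = K * (Real.exp (-(s * dS)) * Real.exp s) := by
          rw [hK]
          have hsb : Real.sqrt b ≠ 0 := by positivity
          field_simp
      _ = K * Real.exp (-(s * (dS - 1))) := by
          rw [← Real.exp_add]
          congr 1
          ring
  set q : ℝ := Real.exp (-(T * (dS - 1))) with hq
  have hq0 : 0 < q := Real.exp_pos _
  have hq1 : q < 1 := by
    rw [hq, Real.exp_lt_one_iff]
    nlinarith
  -- geometric bound on translates
  have hgeom : ∀ (t : ℝ), 0 ≤ t → ∀ n : ℕ,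
      |u (t + n * T)| ≤ (K * Real.exp (-(t * (dS - 1)))) * q ^ n := by
    intro t ht n
    have h1 := hubound (t + n * T) (by positivity)
    calc |u (t + n * T)| ≤ K * Real.exp (-((t + n * T) * (dS - 1))) := h1
      _ = (K * Real.exp (-(t * (dS - 1)))) * q ^ n := by
          rw [hq, ← Real.exp_nat_mul, mul_assoc, ← Real.exp_add]
          congr 2
          ring
  have hsum : ∀ t : ℝ, 0 ≤ t → Summable (fun n : ℕ => u (t + n * T)) := by
    intro t ht
    apply Summable.of_norm_bounded
      ((summable_geometric_of_lt_one hq0.le hq1).mul_left (K * Real.exp (-(t * (dS - 1)))))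
    intro n
    rw [Real.norm_eq_abs]
    exact hgeom t ht n
  -- periodic reduction
  set ρ : ℝ → ℝ := fun t => t - T * ⌊t / T⌋ with hρ
  have hρper : ∀ t, ρ (t + T) = ρ t := by
    intro t
    have hTne : T ≠ 0 := ne_of_gt hT0
    have : (t + T) / T = t / T + 1 := by field_simp
    simp only [hρ, this, Int.floor_add_one]
    push_cast
    ring
  have hρ0 : ∀ t, 0 ≤ ρ t := by
    intro t
    have := Int.floor_le (t / T)
    have h2 : T * (⌊t / T⌋ : ℝ) ≤ T * (t / T) := by
      exact mul_le_mul_of_nonneg_left this hT0.le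
    rw [mul_div_cancel₀ _ (ne_of_gt hT0)] at h2
    simp only [hρ]
    linarith
  -- the periodic function
  refine ⟨fun t => f (ρ t) + ∑' n : ℕ, u (ρ t + n * T), ?_, K / (1 - q), ?_⟩
  · intro t
    simp only [hρper t]
  · filter_upwards [eventually_ge_atTop (1 : ℝ)] with x hx1
    have hx0 : (0:ℝ) < x := lt_of_lt_of_le one_pos hx1
    set t : ℝ := Real.log x / 2 with ht
    have ht0 : 0 ≤ t := by
      have := Real.log_nonneg hx1
      rw [ht]; linarith
    have hext : Real.exp (2 * t) = x := by
      rw [ht, show 2 * (Real.log x / 2) = Real.log x by ring, Real.exp_log hx0]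
    -- express ND x via f
    have hNDx : (ND x : ℝ) = f t * Real.exp (t * dS) := by
      rw [hf]
      simp only [hext]
      rw [mul_comm (Real.exp (-(t * dS))), mul_assoc, ← Real.exp_add]
      simp
    have hxds : x ^ (dS / 2) = Real.exp (t * dS) := by
      rw [Real.rpow_def_of_pos hx0]
      congr 1
      rw [ht]; ring
    have hxhalf : x ^ ((1:ℝ) / 2) = Real.exp t := by
      rw [Real.rpow_def_of_pos hx0]
      congr 1
      rw [ht]; ring
    -- identify the tail
    set m : ℕ := ⌊t / T⌋.toNat with hmdef
    have hge : (0:ℤ) ≤ ⌊t / T⌋ := Int.floor_nonneg.mpr (div_nonneg ht0 hT0.le)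
    have hm : ((m : ℕ) : ℝ) = ((⌊t / T⌋ : ℤ) : ℝ) := by
      rw [hmdef]; exact_mod_cast congrArg (Int.cast : ℤ → ℝ) (Int.toNat_of_nonneg hge)
    have htρ : t = ρ t + m * T := by
      simp only [hρ]
      rw [hm]
      ring
    have hsρ : Summable (fun n : ℕ => u (ρ t + n * T)) := hsum _ (hρ0 t)
    have hsplit : ∑' n : ℕ, u (ρ t + n * T)
        = ∑ n ∈ Finset.range m, u (ρ t + n * T) + ∑' n : ℕ, u (t + n * T) := by
      rw [← Summable.sum_add_tsum_nat_add m hsρ]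
      congr 1
      apply tsum_congr
      intro n
      have harg : ρ t + ((n + m : ℕ) : ℝ) * T = t + (n : ℝ) * T := by
        push_cast
        linear_combination -htρ
      rw [harg]
    have hftel : f t = f (ρ t) + ∑ n ∈ Finset.range m, u (ρ t + n * T) := by
      conv_lhs => rw [htρ]
      exact tel (ρ t) m
    have hdiff : (f (ρ t) + ∑' n : ℕ, u (ρ t + n * T)) - f t
        = ∑' n : ℕ, u (t + n * T) := by
      rw [hsplit, hftel]; ring
    -- bound the tail
    have htail : |∑' n : ℕ, u (t + n * T)|
        ≤ (K * Real.exp (-(t * (dS - 1)))) * (1 - q)⁻¹ := by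
      have hhs : HasSum (fun n : ℕ => (K * Real.exp (-(t * (dS - 1)))) * q ^ n)
          ((K * Real.exp (-(t * (dS - 1)))) * (1 - q)⁻¹) :=
        (hasSum_geometric_of_lt_one hq0.le hq1).mul_left _
      exact tsum_of_norm_bounded hhs (fun n => by
        rw [Real.norm_eq_abs]; exact hgeom t ht0 n)
    -- conclude
    rw [hNDx, hxds, hxhalf]
    have hfinal : |f t * Real.exp (t * dS)
        - (f (ρ t) + ∑' n : ℕ, u (ρ t + n * T)) * Real.exp (t * dS)|
        = |∑' n : ℕ, u (t + n * T)| * Real.exp (t * dS) := by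
      rw [← sub_mul, abs_mul, abs_of_pos (Real.exp_pos _), ← abs_neg, neg_sub, hdiff]
    rw [hfinal]
    calc |∑' n : ℕ, u (t + n * T)| * Real.exp (t * dS)
        ≤ ((K * Real.exp (-(t * (dS - 1)))) * (1 - q)⁻¹) * Real.exp (t * dS) :=
          mul_le_mul_of_nonneg_right htail (Real.exp_pos _).le
      _ = K / (1 - q) * Real.exp t := by
          rw [div_eq_mul_inv]
          rw [mul_comm (K * Real.exp (-(t * (dS - 1)))) ((1-q)⁻¹), mul_assoc, mul_assoc,
            ← Real.exp_add]
          rw [show -(t * (dS - 1)) + t * dS = t by ring]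
          ring
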